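/- Abstractly: suppose (μ_k)_{k≥0} is a family of functions ℝ_{>0} → ℝ_{≥0} with μ_0 ≡ 0, μ_1 = μ, and μ_{k+1}(R) ≤ c·2μ_k(R/2) + μ(R/2)(c^k + 2μ_k(R/2)) where c ∈ (0, 1/(2^{n+1}·5)) and μ(R) ≤ D/R^n for R ≥ 1 and μ(R) ≤ c for all R. Then for every N and all R > 2^N, the sum ν_N(R) := Σ_{k=0}^{N} μ_k(R) satisfies ν_N(R) ≤ (D + D/(1-c))·R^{-n}. -/

import Mathlib

/-- The majorant sequence for the pointwise bounds `μs k R ≤ aSeq k / R^n`. -/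
def aSeq (c D : ℝ) (n : ℕ) : ℕ → ℝ
  | 0 => 0
  | 1 => D
  | (k+2) => 2 ^ (n + 2) * c * aSeq c D n (k + 1) + 2 ^ n * D * c ^ (k + 1)

lemma aSeq_nonneg (c D : ℝ) (n : ℕ) (hc : 0 ≤ c) (hD : 0 ≤ D) :
    ∀ k, 0 ≤ aSeq c D n k
  | 0 => le_refl 0
  | 1 => hD
  | (k+2) => by
      have h := aSeq_nonneg c D n hc hD (k + 1)
      show 0 ≤ 2 ^ (n + 2) * c * aSeq c D n (k + 1) + 2 ^ n * D * c ^ (k + 1)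
      have h1 : 0 ≤ (2:ℝ) ^ (n + 2) * c * aSeq c D n (k + 1) :=
        mul_nonneg (by positivity) h
      have h2 : 0 ≤ (2:ℝ) ^ n * D * c ^ (k + 1) := by positivity
      linarith

lemma sum_aSeq_le (c D : ℝ) (n : ℕ) (hD : 0 < D)
    (hc : 0 < c) (hc' : c < 1 / (2 ^ (n + 1) * 5)) :
    ∀ N, ∑ k ∈ Finset.range (N + 1), aSeq c D n k ≤ D + D / (1 - c) := by
  have hq1 : (1:ℝ) ≤ 2 ^ n := one_le_pow₀ one_le_two
  have hqc : 10 * ((2:ℝ) ^ n * c) < 1 := by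
    have hpos : (0:ℝ) < 2 ^ (n + 1) * 5 := by positivity
    have := (lt_div_iff₀ hpos).mp hc'
    have h2 : (2:ℝ) ^ (n + 1) = 2 * 2 ^ n := by ring
    nlinarith
  have hc1 : c < 1 := by nlinarith
  have h1c : (0:ℝ) < 1 - c := by linarith
  have hT0 : 0 ≤ D + D / (1 - c) := by positivity
  intro N
  induction N using Nat.twoStepInduction with
  | zero =>
      simpa [aSeq] using hT0
  | one =>
      have : ∑ k ∈ Finset.range 2, aSeq c D n k = D := by
        simp [Finset.sum_range_succ, aSeq]
      rw [this]
      have : 0 ≤ D / (1 - c) := by positivity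
      linarith
  | more N _ ih =>
      -- peel off first two terms
      have hsplit : ∑ k ∈ Finset.range (N + 2 + 1), aSeq c D n k
          = (∑ k ∈ Finset.range (N + 1), aSeq c D n (k + 2)) + D := by
        rw [Finset.sum_range_succ' (fun k => aSeq c D n k) (N + 2),
            Finset.sum_range_succ' (fun k => aSeq c D n (k + 1)) (N + 1)]
        simp [aSeq]
      rw [hsplit]
      have hrec : ∑ k ∈ Finset.range (N + 1), aSeq c D n (k + 2)
          = 2 ^ (n + 2) * c * (∑ k ∈ Finset.range (N + 1), aSeq c D n (k + 1))
            + 2 ^ n * D * ∑ k ∈ Finset.range (N + 1), c ^ (k + 1) := by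
        rw [Finset.mul_sum, Finset.mul_sum, ← Finset.sum_add_distrib]
        rfl
      -- bound the shifted sum by the inductive hypothesis
      have hshift : (∑ k ∈ Finset.range (N + 1), aSeq c D n (k + 1))
          ≤ D + D / (1 - c) := by
        have := Finset.sum_range_succ' (fun k => aSeq c D n k) (N + 1)
        have h0 : aSeq c D n 0 = 0 := rfl
        calc (∑ k ∈ Finset.range (N + 1), aSeq c D n (k + 1))
            = ∑ k ∈ Finset.range (N + 2), aSeq c D n k := by
              rw [this, h0]; ring
          _ ≤ D + D / (1 - c) := ih
      -- geometric sum bound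
      have hgeom : (∑ k ∈ Finset.range (N + 1), c ^ (k + 1)) ≤ c / (1 - c) := by
        have hmul := geom_sum_mul c (N + 1)
        have hpow : 0 ≤ c ^ (N + 1) := by positivity
        have hg : (∑ k ∈ Finset.range (N + 1), c ^ k) ≤ 1 / (1 - c) := by
          rw [le_div_iff₀ h1c]
          nlinarith [hmul]
        calc (∑ k ∈ Finset.range (N + 1), c ^ (k + 1))
            = c * ∑ k ∈ Finset.range (N + 1), c ^ k := by
              rw [Finset.mul_sum]; exact Finset.sum_congr rfl (fun k _ => by ring)
          _ ≤ c * (1 / (1 - c)) := by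
              exact mul_le_mul_of_nonneg_left hg hc.le
          _ = c / (1 - c) := by ring
      rw [hrec]
      have hb1 : 2 ^ (n + 2) * c * (∑ k ∈ Finset.range (N + 1), aSeq c D n (k + 1))
          ≤ 2 ^ (n + 2) * c * (D + D / (1 - c)) :=
        mul_le_mul_of_nonneg_left hshift (by positivity)
      have hb2 : 2 ^ n * D * (∑ k ∈ Finset.range (N + 1), c ^ (k + 1))
          ≤ 2 ^ n * D * (c / (1 - c)) :=
        mul_le_mul_of_nonneg_left hgeom (by positivity)
      -- key numerical inequality
      have hkey : 2 ^ (n + 2) * c * (D + D / (1 - c)) + 2 ^ n * D * (c / (1 - c))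
          ≤ D / (1 - c) := by
        rw [← sub_nonneg]
        have hexp : D / (1 - c) - (2 ^ (n + 2) * c * (D + D / (1 - c))
              + 2 ^ n * D * (c / (1 - c)))
            = (D - (4 * (2 ^ n * c * D) * (1 - c) + 4 * (2 ^ n * c * D)
                + 2 ^ n * c * D)) / (1 - c) := by
          field_simp
          ring
        rw [hexp]
        apply div_nonneg _ h1c.le
        have hx : (2:ℝ) ^ n * c * D < D / 10 := by nlinarith
        nlinarith [mul_nonneg (mul_nonneg (mul_nonneg (le_trans zero_le_one hq1) hc.le) hD.le) hc.le]
      linarith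

/-- the abstract Neumann-series estimate.  Suppose `(μs k)_{k ≥ 0}` is a
family of functions `ℝ_{>0} → ℝ_{≥0}` with `μs 0 ≡ 0`, `μs 1 = μ`, and
`μs (k+1) R ≤ c·2·μs k (R/2) + μ (R/2)·(c^k + 2·μs k (R/2))`, where
`0 < c < 1/(2^(n+1)·5)`, `μ R ≤ D / R^n` for `R ≥ 1` and `μ R ≤ c` for all `R > 0`.
Then for every `N` and all `R > 2^N` the sum `ν_N(R) := ∑_{k=0}^{N} μs k R` satisfies
`ν_N(R) ≤ (D + D/(1-c)) / R^n`. -/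
theorem neumann_partial_sum_dominating_estimate
    (μs : ℕ → ℝ → ℝ) (μ : ℝ → ℝ) (c D : ℝ) (n : ℕ)
    (hD : 0 < D)
    (hc : 0 < c) (hc' : c < 1 / (2 ^ (n + 1) * 5))
    (hnonneg : ∀ k R, 0 < R → 0 ≤ μs k R)
    (hzero : ∀ R, 0 < R → μs 0 R = 0)
    (hone : ∀ R, 0 < R → μs 1 R = μ R)
    (hrec : ∀ k : ℕ, ∀ R : ℝ, 0 < R →
      μs (k + 1) R ≤ c * (2 * μs k (R / 2)) + μ (R / 2) * (c ^ k + 2 * μs k (R / 2)))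
    (hμD : ∀ R : ℝ, 1 ≤ R → μ R ≤ D / R ^ n)
    (hμc : ∀ R : ℝ, 0 < R → μ R ≤ c) :
    ∀ N : ℕ, ∀ R : ℝ, (2 : ℝ) ^ N < R →
      ∑ k ∈ Finset.range (N + 1), μs k R ≤ (D + D / (1 - c)) / R ^ n := by
  -- pointwise bound
  have key : ∀ k : ℕ, ∀ R : ℝ, (2:ℝ) ^ k < 2 * R → μs k R ≤ aSeq c D n k / R ^ n := by
    intro k
    induction k using Nat.twoStepInduction with
    | zero =>
        intro R hR
        have hR0 : 0 < R := by
          have : (0:ℝ) < 2 ^ 0 := by norm_num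
          nlinarith
        rw [hzero R hR0]
        show (0:ℝ) ≤ aSeq c D n 0 / R ^ n
        simp [aSeq]
    | one =>
        intro R hR
        have hR1 : (1:ℝ) < R := by
          have : (2:ℝ) ^ 1 = 2 := by norm_num
          nlinarith
        have hR0 : 0 < R := by linarith
        rw [hone R hR0]
        show μ R ≤ aSeq c D n 1 / R ^ n
        exact hμD R hR1.le
    | more k _ ih =>
        intro R hR
        have h2k : (1:ℝ) ≤ 2 ^ (k + 1) := one_le_pow₀ one_le_two
        have hRbig : (2:ℝ) ^ (k + 1) < R := by
          have : (2:ℝ) ^ (k + 2) = 2 * 2 ^ (k + 1) := by ring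
          nlinarith
        have hR0 : 0 < R := lt_of_le_of_lt (by positivity) hRbig
        have hR2 : (1:ℝ) ≤ R / 2 := by
          have : (2:ℝ) ≤ 2 ^ (k + 1) := by
            calc (2:ℝ) = 2 ^ 1 := by norm_num
            _ ≤ 2 ^ (k + 1) := pow_le_pow_right₀ one_le_two (by omega)
          linarith
        have hR20 : (0:ℝ) < R / 2 := by linarith
        have hih : μs (k + 1) (R / 2) ≤ aSeq c D n (k + 1) / (R / 2) ^ n := by
          apply ih
          nlinarith
        have hRn : (0:ℝ) < R ^ n := pow_pos hR0 n
        have hhalf : ((R:ℝ) / 2) ^ n = R ^ n / 2 ^ n := div_pow R 2 n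
        have hm : μs (k + 1) (R / 2) ≤ 2 ^ n * aSeq c D n (k + 1) / R ^ n := by
          rw [hhalf] at hih
          calc μs (k + 1) (R / 2) ≤ aSeq c D n (k + 1) / (R ^ n / 2 ^ n) := hih
            _ = 2 ^ n * aSeq c D n (k + 1) / R ^ n := by
                field_simp
        have hm0 : 0 ≤ μs (k + 1) (R / 2) := hnonneg _ _ hR20
        have hu1 : μ (R / 2) ≤ 2 ^ n * D / R ^ n := by
          have := hμD (R / 2) hR2
          rw [hhalf] at this
          calc μ (R / 2) ≤ D / (R ^ n / 2 ^ n) := this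
            _ = 2 ^ n * D / R ^ n := by field_simp
        have hu2 : μ (R / 2) ≤ c := hμc _ hR20
        have hu0 : 0 ≤ μ (R / 2) := by
          rw [← hone _ hR20]; exact hnonneg _ _ hR20
        have ha : 0 ≤ aSeq c D n (k + 1) := aSeq_nonneg c D n hc.le hD.le _
        have hstep := hrec (k + 1) R hR0
        have h1 : c * (2 * μs (k + 1) (R / 2))
            ≤ 2 * (c * (2 ^ n * aSeq c D n (k + 1) / R ^ n)) := by
          have := mul_le_mul_of_nonneg_left hm hc.le
          linarith
        have h2 : μ (R / 2) * c ^ (k + 1) ≤ (2 ^ n * D / R ^ n) * c ^ (k + 1) :=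
          mul_le_mul_of_nonneg_right hu1 (by positivity)
        have h3 : μ (R / 2) * (2 * μs (k + 1) (R / 2))
            ≤ 2 * (c * (2 ^ n * aSeq c D n (k + 1) / R ^ n)) := by
          have hmc : μ (R / 2) * μs (k + 1) (R / 2)
              ≤ c * (2 ^ n * aSeq c D n (k + 1) / R ^ n) :=
            mul_le_mul hu2 hm hm0 hc.le
          linarith
        have hexpand : μ (R / 2) * (c ^ (k + 1) + 2 * μs (k + 1) (R / 2))
            = μ (R / 2) * c ^ (k + 1) + μ (R / 2) * (2 * μs (k + 1) (R / 2)) := by ring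
        have htarget : aSeq c D n (k + 2) / R ^ n
            = 2 * (c * (2 ^ n * aSeq c D n (k + 1) / R ^ n))
              + (2 ^ n * D / R ^ n) * c ^ (k + 1)
              + 2 * (c * (2 ^ n * aSeq c D n (k + 1) / R ^ n)) := by
          show (2 ^ (n + 2) * c * aSeq c D n (k + 1) + 2 ^ n * D * c ^ (k + 1)) / R ^ n = _
          field_simp
          ring
        rw [htarget]
        calc μs (k + 2) R ≤ c * (2 * μs (k + 1) (R / 2))
              + μ (R / 2) * (c ^ (k + 1) + 2 * μs (k + 1) (R / 2)) := hstep
          _ = c * (2 * μs (k + 1) (R / 2)) + μ (R / 2) * c ^ (k + 1)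
              + μ (R / 2) * (2 * μs (k + 1) (R / 2)) := by rw [hexpand]; ring
          _ ≤ _ := by linarith
  intro N R hR
  have hR0 : 0 < R := lt_trans (by positivity) hR
  have hRn : 0 < R ^ n := pow_pos hR0 n
  calc ∑ k ∈ Finset.range (N + 1), μs k R
      ≤ ∑ k ∈ Finset.range (N + 1), aSeq c D n k / R ^ n := by
        apply Finset.sum_le_sum
        intro k hk
        apply key
        have hkN : k ≤ N := Nat.lt_succ_iff.mp (Finset.mem_range.mp hk)
        have : (2:ℝ) ^ k ≤ 2 ^ N := pow_le_pow_right₀ one_le_two hkN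
        linarith
    _ = (∑ k ∈ Finset.range (N + 1), aSeq c D n k) / R ^ n := by
        rw [Finset.sum_div]
    _ ≤ (D + D / (1 - c)) / R ^ n := by
        gcongr
        exact sum_aSeq_le c D n hD hc hc' N
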